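/- Let ℓ, K be positive natural numbers, W : Fin K → ℝ^ℓ and b : Fin K → ℝ. For each k, define the power cell with sites μ_k = W_k/2 and weights w_k = b_k + ‖W_k‖²/4 as ω_k = {z ∈ ℝ^ℓ : ∀ j, ‖z − μ_k‖² − w_k ≤ ‖z − μ_j‖² − w_j}. Then for every k, the decision region of the linear classifier {z ∈ ℝ^ℓ : ∀ j, ⟪W_j, z⟫ + b_j ≤ ⟪W_k, z⟫ + b_k} equals ω_k. -/

import Mathlib

open scoped RealInnerProductSpace

/-- A linear (logistic regression) classifier partitions feature space into a
Power Diagram with sites `μ k = W k / 2` and weights `w k = b k + ‖W k‖²/4`. -/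
theorem linear_decision_region_eq_power_cell (ℓ K : ℕ) (hℓ : 0 < ℓ) (hK : 0 < K)
    (W : Fin K → EuclideanSpace ℝ (Fin ℓ)) (b : Fin K → ℝ) (k : Fin K) :
    {z : EuclideanSpace ℝ (Fin ℓ) | ∀ j, ⟪W j, z⟫ + b j ≤ ⟪W k, z⟫ + b k} =
      {z : EuclideanSpace ℝ (Fin ℓ) | ∀ j,
        ‖z - (2⁻¹ : ℝ) • W k‖ ^ 2 - (b k + ‖W k‖ ^ 2 / 4) ≤
          ‖z - (2⁻¹ : ℝ) • W j‖ ^ 2 - (b j + ‖W j‖ ^ 2 / 4)} := by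
  have key : ∀ (j : Fin K) (z : EuclideanSpace ℝ (Fin ℓ)),
      ‖z - (2⁻¹ : ℝ) • W j‖ ^ 2 - (b j + ‖W j‖ ^ 2 / 4)
        = ‖z‖ ^ 2 - ⟪W j, z⟫ - b j := by
    intro j z
    rw [norm_sub_sq_real, real_inner_smul_right, norm_smul]
    simp [mul_pow, mul_comm]
    linarith [real_inner_comm (W j) z]
  ext z
  simp only [Set.mem_setOf_eq, key]
  constructor <;> intro h j <;> have := h j <;> linarith
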